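/- Let 𝓕 be an r-dimensional vector space of real-valued functions on ℝ^p, and let 𝓐 = {{z : f(z) ≥ 0} : f ∈ 𝓕}. Then the VC dimension of 𝓐 is at most r; that is, no set of r+1 points in ℝ^p is shattered by 𝓐. -/
import Mathlib

lemma stmt_11_aux (p : ℕ) (𝓕 : Submodule ℝ ((Fin p → ℝ) → ℝ)) (G : Finset (Fin p → ℝ))
    (γ : ↥G → ℝ) (hsum : ∀ f ∈ 𝓕, ∑ z : G, γ z * f z = 0)
    (hneg : ∃ z, γ z < 0)
    (hshat : ∀ S ⊆ G, ∃ f ∈ 𝓕, ∀ z ∈ G, (z ∈ S ↔ 0 ≤ f z)) : False := by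
  classical
  obtain ⟨f, hf, hfS⟩ := hshat (G.filter fun z => ∃ h : z ∈ G, 0 < γ ⟨z, h⟩)
    (Finset.filter_subset _ _)
  have hmemS : ∀ z : G, ((z : Fin p → ℝ) ∈ G.filter fun w => ∃ hw : w ∈ G, 0 < γ ⟨w, hw⟩)
      ↔ 0 < γ z := by
    intro z
    simp only [Finset.mem_filter]
    constructor
    · rintro ⟨_, hw, hpos⟩
      have : (⟨(z : Fin p → ℝ), hw⟩ : ↥G) = z := rfl
      rwa [this] at hpos
    · intro h; exact ⟨z.2, z.2, h⟩
  have hfneg : ∀ z : G, γ z < 0 → f z < 0 := by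
    intro z hz
    by_contra h
    push_neg at h
    have := (hfS z z.2).2 h
    rw [hmemS z] at this
    linarith
  have hterm : ∀ z : G, 0 ≤ γ z * f z := by
    intro z
    rcases lt_trichotomy (γ z) 0 with h | h | h
    · have := hfneg z h
      nlinarith
    · simp [h]
    · have hz := (hfS z z.2).1 ((hmemS z).mpr h)
      exact mul_nonneg h.le hz
  obtain ⟨z0, hz0⟩ := hneg
  have hpos : 0 < γ z0 * f z0 := mul_pos_of_neg_of_neg hz0 (hfneg z0 hz0)
  have : 0 < ∑ z : G, γ z * f z :=
    Finset.sum_pos' (fun z _ => hterm z) ⟨z0, Finset.mem_univ _, hpos⟩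
  linarith [hsum f hf]

/-- If `𝓕` is an `r`-dimensional vector space of real functions on `ℝ^p` and
`𝓐 = {{z : f(z) ≥ 0} : f ∈ 𝓕}`, then no set of `r + 1` points is shattered by `𝓐`,
i.e. the VC dimension of `𝓐` is at most `r`. -/
theorem stmt_11 (p r : ℕ) (𝓕 : Submodule ℝ ((Fin p → ℝ) → ℝ))
    (hfd : FiniteDimensional ℝ 𝓕) (hr : Module.finrank ℝ 𝓕 = r) :
    ∀ G : Finset (Fin p → ℝ), G.card = r + 1 →
      ¬ (∀ S ⊆ G, ∃ f ∈ 𝓕, ∀ z ∈ G, (z ∈ S ↔ 0 ≤ f z)) := by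
  classical
  intro G hG hshat
  let Ψ : (↥G → ℝ) →ₗ[ℝ] (𝓕 →ₗ[ℝ] ℝ) :=
    { toFun := fun γ =>
        { toFun := fun f => ∑ z : G, γ z * (f : (Fin p → ℝ) → ℝ) z
          map_add' := by
            intro a b
            simp [mul_add, Finset.sum_add_distrib]
          map_smul' := by
            intro c a
            simp [Finset.mul_sum, mul_left_comm, mul_comm, mul_assoc] }
      map_add' := by
        intro a b
        ext f
        simp [add_mul, Finset.sum_add_distrib]
      map_smul' := by
        intro c a
        ext f
        simp [Finset.mul_sum, mul_assoc] }
  have hnotinj : ¬ Function.Injective Ψ := by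
    intro hinj
    have h1 : Module.finrank ℝ (↥G → ℝ) ≤ Module.finrank ℝ (𝓕 →ₗ[ℝ] ℝ) :=
      LinearMap.finrank_le_finrank_of_injective hinj
    have h2 : Module.finrank ℝ (↥G → ℝ) = r + 1 := by
      simp [Module.finrank_pi, hG]
    have h3 : Module.finrank ℝ (𝓕 →ₗ[ℝ] ℝ) = r := by
      rw [Module.finrank_linearMap, hr, Module.finrank_self, mul_one]
    omega
  rw [← LinearMap.ker_eq_bot] at hnotinj
  obtain ⟨γ, hγmem, hγne⟩ := Submodule.exists_mem_ne_zero_of_ne_bot hnotinj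
  have hγ0 : ∀ f ∈ 𝓕, ∑ z : G, γ z * f z = 0 := by
    intro f hf
    have := LinearMap.mem_ker.mp hγmem
    have := LinearMap.congr_fun this ⟨f, hf⟩
    simpa [Ψ] using this
  by_cases hneg : ∃ z, γ z < 0
  · exact stmt_11_aux p 𝓕 G γ hγ0 hneg hshat
  · push_neg at hneg
    obtain ⟨z0, hz0⟩ := Function.ne_iff.mp hγne
    have hz0' : 0 < γ z0 := lt_of_le_of_ne (hneg z0) (Ne.symm hz0)
    refine stmt_11_aux p 𝓕 G (-γ) ?_ ⟨z0, by simpa using hz0'⟩ hshat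
    intro f hf
    have := hγ0 f hf
    simp only [Pi.neg_apply, neg_mul]
    rw [Finset.sum_neg_distrib]
    linarith
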